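/- If M is an even rank-2 lattice with Gram matrix (a_ij) such that every entry of the adjugate matrix [[2c, -b],[-b, 2a]] is divisible by 11 and det M = -121, then every entry a_ij is divisible by 11, so M = M₁(11) for an even unimodular lattice M₁ of rank 2 and signature (1,1); hence M is isometric to U(11). -/

import Mathlib

open Matrix

private lemma trfin (p q r s : ℤ) : (!![p,q;r,s])ᵀ = !![p,r;q,s] := by
  ext i j; fin_cases i <;> fin_cases j <;> simp

private lemma mkeq (w x y z w' x' y' z' : ℤ) (h1 : w = w') (h2 : x = x')
    (h3 : y = y') (h4 : z = z') : !![w,x;y,z] = !![w',x';y',z'] := by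
  rw [h1, h2, h3, h4]

private lemma conjfin (a b c p q r s : ℤ) :
    (!![p,q;r,s])ᵀ * !![2*a, b; b, 2*c] * !![p,q;r,s] =
    !![2*a*p^2+2*b*p*r+2*c*r^2, 2*a*p*q+b*(p*s+q*r)+2*c*r*s;
       2*a*p*q+b*(p*s+q*r)+2*c*r*s, 2*a*q^2+2*b*q*s+2*c*s^2] := by
  rw [trfin]; simp [Matrix.mul_fin_two]; ring_nf; simp only [and_self]

private lemma unit_of_conj (G P : Matrix (Fin 2) (Fin 2) ℤ) (hG : G.det = -1)
    (h : Pᵀ * G * P = !![0,1;1,0]) : IsUnit P.det := by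
  have hd := congrArg Matrix.det h
  rw [Matrix.det_mul, Matrix.det_mul, Matrix.det_transpose, hG] at hd
  simp [Matrix.det_fin_two_of] at hd
  exact IsUnit.of_mul_eq_one _ (by linear_combination hd)

private lemma key2 (g k₁ a₁ c x y : ℤ) (hg : g ≠ 0)
    (h : 4*(g*a₁)*c - (2*(g*k₁)+1)^2 = -1) (hxy : x*k₁ + y*a₁ = 1) :
    ∃ P : Matrix (Fin 2) (Fin 2) ℤ, IsUnit P.det ∧
      Pᵀ * !![2*(g*a₁), 2*(g*k₁)+1; 2*(g*k₁)+1, 2*c] * P = !![0,1;1,0] := by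
  set a : ℤ := g*a₁ with hadef
  set b : ℤ := 2*(g*k₁)+1 with hbdef
  have hGdet : (!![2*a, b; b, 2*c]).det = -1 := by
    simp [Matrix.det_fin_two_of]; linear_combination h
  have hE : a*k₁^2 - b*k₁*a₁ + c*a₁^2 = 0 := by
    have h4 : (4*g) * (a*k₁^2 - b*k₁*a₁ + c*a₁^2) = 0 := by
      rw [hadef, hbdef]; linear_combination a₁ * h
    rcases mul_eq_zero.mp h4 with h' | h'
    · exact absurd h' (by omega)
    · exact h'
  set u1 : ℤ := 2*a*k₁ - b*a₁ with hu1
  set u2 : ℤ := b*k₁ - 2*c*a₁ with hu2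
  have L1 : b*u2 - 2*c*u1 = k₁ := by rw [hu1, hu2]; linear_combination (-k₁) * h
  have L2 : 2*a*u2 - b*u1 = a₁ := by rw [hu1, hu2]; linear_combination (-a₁) * h
  set s : ℤ := -2*c*x - b*y with hs
  set t : ℤ := b*x + 2*a*y with ht
  have L3 : u1*s + u2*t = 1 := by
    rw [hs, ht]; linear_combination x * L1 + y * L2 + hxy
  set m : ℤ := a*s^2 + b*s*t + c*t^2 with hm
  have hoff : 2*a*k₁*(s - m*k₁) + b*(k₁*(t + m*a₁) + (s - m*k₁)*(-a₁)) + 2*c*(-a₁)*(t + m*a₁) = 1 := by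
    have hrw : 2*a*k₁*(s - m*k₁) + b*(k₁*(t + m*a₁) + (s - m*k₁)*(-a₁)) + 2*c*(-a₁)*(t + m*a₁)
        = u1*s + u2*t - 2*m*(a*k₁^2 - b*k₁*a₁ + c*a₁^2) := by rw [hu1, hu2]; ring
    rw [hrw, hE, L3]; ring
  have hdiag : 2*a*(s - m*k₁)^2 + 2*b*(s - m*k₁)*(t + m*a₁) + 2*c*(t + m*a₁)^2 = 0 := by
    have hrw : 2*a*(s - m*k₁)^2 + 2*b*(s - m*k₁)*(t + m*a₁) + 2*c*(t + m*a₁)^2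
        = 2*m - 2*m*(u1*s + u2*t) + 2*m^2*(a*k₁^2 - b*k₁*a₁ + c*a₁^2) := by
      rw [hu1, hu2, hm]; ring
    rw [hrw, hE, L3]; ring
  have hmat : (!![k₁, s - m*k₁; -a₁, t + m*a₁])ᵀ * !![2*a, b; b, 2*c] *
      !![k₁, s - m*k₁; -a₁, t + m*a₁] = !![0,1;1,0] := by
    rw [conjfin]
    exact mkeq _ _ _ _ _ _ _ _ (by linear_combination 2 * hE) hoff hoff hdiag
  exact ⟨_, unit_of_conj _ _ hGdet hmat, hmat⟩

private lemma key (a b c : ℤ) (h : 4*a*c - b^2 = -1) :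
    ∃ P : Matrix (Fin 2) (Fin 2) ℤ, IsUnit P.det ∧
      Pᵀ * !![2*a, b; b, 2*c] * P = !![0,1;1,0] := by
  have hGdet : (!![2*a, b; b, 2*c]).det = -1 := by
    simp [Matrix.det_fin_two_of]; linear_combination h
  have hodd : Odd b := by
    rcases Int.even_or_odd b with ⟨t, ht⟩ | ho
    · exfalso
      rw [ht] at h
      have h4 : (4:ℤ) * (a*c - t*t) = -1 := by linear_combination h
      have : (4:ℤ) ∣ -1 := ⟨_, h4.symm⟩
      norm_num at this
    · exact ho
  obtain ⟨k, hbk⟩ := hodd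
  subst hbk
  by_cases ha : a = 0
  · subst ha
    have hb2 : (2*k+1)^2 = 1 := by linear_combination -h
    have hbb : (2*k+1) * (2*k+1) = 1 := by linear_combination hb2
    refine ⟨!![1, -c; 0, 2*k+1], ?_, ?_⟩
    · have hdP : (!![1, -c; 0, 2*k+1] : Matrix (Fin 2) (Fin 2) ℤ).det = 2*k+1 := by
        simp [Matrix.det_fin_two_of]
      rw [hdP]; exact IsUnit.of_mul_eq_one _ hbb
    · rw [conjfin]
      exact mkeq _ _ _ _ _ _ _ _ (by ring) (by linear_combination hb2)
        (by linear_combination hb2) (by ring)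
  · have hgpos : 0 < Int.gcd k a := Int.gcd_pos_of_ne_zero_right k ha
    set g : ℤ := (Int.gcd k a : ℤ) with hgdef
    have hgne : g ≠ 0 := by positivity
    obtain ⟨k₁, hk1⟩ : g ∣ k := Int.gcd_dvd_left k a
    obtain ⟨a₁, ha1⟩ : g ∣ a := Int.gcd_dvd_right k a
    have hcop : IsCoprime k₁ a₁ := by
      rw [Int.isCoprime_iff_gcd_eq_one]
      have h2 := Int.gcd_div_gcd_div_gcd hgpos
      rw [← hgdef, hk1, ha1, Int.mul_ediv_cancel_left _ hgne,
        Int.mul_ediv_cancel_left _ hgne] at h2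
      exact h2
    obtain ⟨x, y, hxy⟩ := hcop
    have hmx : !![2*a, 2*k+1; 2*k+1, 2*c] = !![2*(g*a₁), 2*(g*k₁)+1; 2*(g*k₁)+1, 2*c] := by
      rw [← hk1, ← ha1]
    rw [hmx]
    exact key2 g k₁ a₁ c x y hgne (by rw [← hk1, ← ha1]; linear_combination h) hxy

/-- If the Gram matrix `[[2a,b],[b,2c]]` of an even rank-2 lattice has adjugate
entries `2c, -b, -b, 2a` all divisible by `11` and determinant `-121`, then all
entries are divisible by `11`, `M = M₁(11)` for an even unimodular `M₁`, and `M`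
is isometric to `U(11)`. -/
theorem even_rank_two_eleven_elementary (a b c : ℤ)
    (hadj : (11 : ℤ) ∣ 2 * c ∧ (11 : ℤ) ∣ -b ∧ (11 : ℤ) ∣ 2 * a)
    (hdet : (2 * a) * (2 * c) - b ^ 2 = -121) :
    ((11 : ℤ) ∣ 2 * a ∧ (11 : ℤ) ∣ b ∧ (11 : ℤ) ∣ 2 * c) ∧
    (∃ a' b' c' : ℤ, a = 11 * a' ∧ b = 11 * b' ∧ c = 11 * c' ∧
      (2 * a') * (2 * c') - b' ^ 2 = -1) ∧
    (∃ P : Matrix (Fin 2) (Fin 2) ℤ, IsUnit P.det ∧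
      Pᵀ * !![2 * a, b; b, 2 * c] * P = !![0, 11; 11, 0]) := by
  obtain ⟨h2c, hnb, h2a⟩ := hadj
  have hda : (11:ℤ) ∣ a := by omega
  have hdb : (11:ℤ) ∣ b := by omega
  have hdc : (11:ℤ) ∣ c := by omega
  obtain ⟨a', rfl⟩ := hda
  obtain ⟨b', rfl⟩ := hdb
  obtain ⟨c', rfl⟩ := hdc
  have hdet' : (2 * a') * (2 * c') - b' ^ 2 = -1 := by
    have h121 : (121 : ℤ) * ((2 * a') * (2 * c') - b' ^ 2) = 121 * (-1) := by
      linear_combination hdet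
    exact mul_left_cancel₀ (by norm_num) h121
  refine ⟨⟨h2a, Dvd.intro b' rfl, h2c⟩, ⟨a', b', c', rfl, rfl, rfl, hdet'⟩, ?_⟩
  obtain ⟨P, hPu, hPG⟩ := key a' b' c' (by linear_combination hdet')
  refine ⟨P, hPu, ?_⟩
  have hsc : !![2 * (11*a'), 11*b'; 11*b', 2 * (11*c')] =
      (11:ℤ) • !![2*a', b'; b', 2*c'] := by
    ext i j; fin_cases i <;> fin_cases j <;> simp <;> ring
  rw [hsc, Matrix.mul_smul, Matrix.smul_mul, hPG]
  ext i j; fin_cases i <;> fin_cases j <;> simp
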